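/- arXiv:1508.00159 — 4 statements merged into one kernel-verified Lean document; each statement's English description precedes it below -/
import Mathlib

section
/- Let 0 → B → C → A → 0 be a short exact sequence of finitely generated abelian groups; that is, there are an injective group homomorphism i : B → C and a surjective group homomorphism p : C → A with range(i) = ker(p). If C is isomorphic to A ⊕ B as an abelian group, then the sequence splits: there exists a group homomorphism s : A → C with p ∘ s = id_A. -/
/-- The group of homomorphisms from a finite abelian group to a finitely
generated abelian group is finite. -/
lemma my_finite_addMonoidHom (T X : Type*) [AddCommGroup T] [AddCommGroup X]
    [Finite T] [AddGroup.FG X] : Finite (T →+ X) := by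
  have hX : Module.Finite ℤ X := Module.Finite.iff_addGroup_fg.mpr ‹_›
  set n : ℕ := Nat.card T with hn
  have hnpos : 0 < n := Nat.card_pos
  set S : Submodule ℤ X := Submodule.torsionBy ℤ X (n : ℤ) with hS
  have hSfin : Finite S := by
    have hfg : Module.Finite ℤ S := Module.Finite.iff_fg.mpr (IsNoetherian.noetherian S)
    refine Module.finite_of_fg_torsion S ?_
    intro x
    refine ⟨⟨(n : ℤ), mem_nonZeroDivisors_of_ne_zero (by exact_mod_cast hnpos.ne')⟩, ?_⟩
    ext
    exact x.2
  have hmem : ∀ (f : T →+ X) (t : T), f t ∈ S := by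
    intro f t
    rw [Submodule.mem_torsionBy_iff]
    have : (n : ℤ) • t = 0 := by
      rw [natCast_zsmul]
      exact card_nsmul_eq_zero'
    calc (n : ℤ) • f t = f ((n : ℤ) • t) := (map_zsmul f _ _).symm
    _ = 0 := by rw [this, map_zero]
  have hinj : Function.Injective (fun (f : T →+ X) (t : T) => (⟨f t, hmem f t⟩ : S)) := by
    intro f g h
    ext t
    exact congrArg Subtype.val (congrFun h t)
  exact Finite.of_injective _ hinj

/-- Key counting lemma: homomorphisms from a finite abelian group to `A` lift
along `p`. -/
lemma my_lift_of_finite {A B C : Type*} [AddCommGroup A] [AddCommGroup B] [AddCommGroup C]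
    [AddGroup.FG A] [AddGroup.FG B] [AddGroup.FG C]
    (i : B →+ C) (p : C →+ A)
    (hi : Function.Injective i) (hexact : i.range = p.ker)
    (e : C ≃+ A × B) (T : Type*) [AddCommGroup T] [Finite T] (f : T →+ A) :
    ∃ h : T →+ C, p.comp h = f := by
  haveI : Finite (T →+ A) := my_finite_addMonoidHom T A
  haveI : Finite (T →+ B) := my_finite_addMonoidHom T B
  haveI : Finite (T →+ C) := my_finite_addMonoidHom T C
  -- postcomposition with `p`
  set Φ : (T →+ C) →+ (T →+ A) :=
    { toFun := fun g => p.comp g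
      map_zero' := by ext t; simp
      map_add' := by intro g₁ g₂; ext t; simp } with hΦ
  -- cardinality of the hom groups
  have hcard : Nat.card (T →+ C) = Nat.card (T →+ A) * Nat.card (T →+ B) := by
    have E : (T →+ C) ≃ (T →+ A) × (T →+ B) :=
      { toFun := fun g => (((AddMonoidHom.fst A B).comp e.toAddMonoidHom).comp g,
          ((AddMonoidHom.snd A B).comp e.toAddMonoidHom).comp g)
        invFun := fun gh => e.symm.toAddMonoidHom.comp (gh.1.prod gh.2)
        left_inv := by intro g; ext t; simp
        right_inv := by
          intro gh
          refine Prod.ext ?_ ?_ <;> (ext t; simp) }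
    rw [Nat.card_congr E, Nat.card_prod]
  -- the kernel of `Φ` is isomorphic to `T →+ B`
  have hker : Nat.card Φ.ker = Nat.card (T →+ B) := by
    have hbij : Function.Bijective
        (fun g : T →+ B => (⟨i.comp g, by
          rw [AddMonoidHom.mem_ker]; ext t
          have : i (g t) ∈ p.ker := hexact ▸ AddMonoidHom.mem_range.mpr ⟨g t, rfl⟩
          exact this⟩ : Φ.ker)) := by
      constructor
      · intro g₁ g₂ hgg
        ext t
        apply hi
        exact DFunLike.congr_fun (congrArg Subtype.val hgg) t
      · rintro ⟨g, hg⟩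
        rw [AddMonoidHom.mem_ker] at hg
        have hmem : ∀ t, g t ∈ i.range := by
          intro t
          rw [hexact, AddMonoidHom.mem_ker]
          exact DFunLike.congr_fun hg t
        refine ⟨(AddMonoidHom.ofInjective hi).symm.toAddMonoidHom.comp
          (g.codRestrict i.range hmem), ?_⟩
        apply Subtype.ext
        ext t
        simpa using AddMonoidHom.apply_ofInjective_symm hi (⟨g t, hmem t⟩ : i.range)
    exact (Nat.card_eq_of_bijective _ hbij).symm
  -- first isomorphism theorem
  have hrange : Nat.card Φ.range = Nat.card (T →+ A) := by
    have h1 : Nat.card (T →+ C) = Nat.card ((T →+ C) ⧸ Φ.ker) * Nat.card Φ.ker :=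
      AddSubgroup.card_eq_card_quotient_mul_card_addSubgroup _
    have h2 : Nat.card ((T →+ C) ⧸ Φ.ker) = Nat.card Φ.range :=
      Nat.card_congr (QuotientAddGroup.quotientKerEquivRange Φ).toEquiv
    have hBpos : 0 < Nat.card (T →+ B) := Nat.card_pos
    have := h1
    rw [h2, hker, hcard] at this
    exact (Nat.eq_of_mul_eq_mul_right hBpos this.symm)
  have htop : Φ.range = ⊤ := AddSubgroup.eq_top_of_card_eq _ hrange
  have : f ∈ Φ.range := htop ▸ AddSubgroup.mem_top f
  obtain ⟨h, hh⟩ := this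
  exact ⟨h, hh⟩



/-- **Splitting of short exact sequences of finitely generated abelian groups.**
Let `0 → B → C → A → 0` be a short exact sequence of finitely generated abelian
groups (i.e. `i : B → C` injective, `p : C → A` surjective, `range i = ker p`).
If `C` is isomorphic to `A ⊕ B` as an abelian group, then the sequence splits:
there is a homomorphism `s : A → C` with `p ∘ s = id`. -/
theorem short_exact_sequence_splits_of_iso_direct_sum
    (A B C : Type*) [AddCommGroup A] [AddCommGroup B] [AddCommGroup C]
    [AddGroup.FG A] [AddGroup.FG B] [AddGroup.FG C]
    (i : B →+ C) (p : C →+ A)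
    (hi : Function.Injective i) (hp : Function.Surjective p)
    (hexact : i.range = p.ker)
    (hiso : Nonempty (C ≃+ A × B)) :
    ∃ s : A →+ C, p.comp s = AddMonoidHom.id A := by
  obtain ⟨e⟩ := hiso
  classical
  -- structure theorem for `A`
  obtain ⟨n, ι, hι, q, hq, exp, ⟨eA⟩⟩ := AddCommGroup.equiv_free_prod_directSum_zmod A
  set F := (Fin n →₀ ℤ)
  set D := DirectSum ι fun j => ZMod (q j ^ exp j)
  haveI : ∀ j : ι, NeZero (q j ^ exp j) := fun j =>
    ⟨pow_ne_zero _ (hq j).ne_zero⟩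
  haveI : Finite D := Finite.of_equiv _ DFinsupp.equivFunOnFintype.symm
  -- lift the free part using projectivity
  have hpL : Function.Surjective (p.toIntLinearMap) := hp
  obtain ⟨gL, hgL⟩ := Module.projective_lifting_property (p.toIntLinearMap)
    ((eA.symm.toAddMonoidHom.comp (AddMonoidHom.inl F D)).toIntLinearMap) hpL
  -- lift the torsion part using the counting lemma
  obtain ⟨h, hh⟩ := my_lift_of_finite i p hi hexact e D
    (eA.symm.toAddMonoidHom.comp (AddMonoidHom.inr F D))
  -- assemble the section
  refine ⟨(gL.toAddMonoidHom.coprod h).comp eA.toAddMonoidHom, ?_⟩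
  ext a
  have h1 : p (gL (eA a).1) = eA.symm ((eA a).1, 0) :=
    DFunLike.congr_fun hgL ((eA a).1)
  have h2 : p (h (eA a).2) = eA.symm (0, (eA a).2) :=
    DFunLike.congr_fun hh ((eA a).2)
  simp only [AddMonoidHom.comp_apply, AddMonoidHom.coprod_apply, AddMonoidHom.id_apply,
    AddEquiv.coe_toAddMonoidHom, LinearMap.toAddMonoidHom_coe, map_add, h1, h2]
  rw [← map_add]
  simp [Prod.mk_add_mk]
end

section
/- Let R be a (possibly noncommutative) ring that is both left-Artinian and left-Noetherian, and let f : R → R be an endomorphism of the additive group of R such that, for every natural number n, both the image f^n(R) of the n-th iterate of f and the kernel ker(f^n) are two-sided ideals of R. Set f^∞R = ⋂_{n≥0} f^n(R) and f^{−∞}0 = ⋃_{n≥0} ker(f^n). Then f^∞R ∩ f^{−∞}0 = 0 and f^∞R + f^{−∞}0 = R; consequently every element of R is uniquely the sum of an element of f^∞R and an element of f^{−∞}0, and x·y = 0 = y·x whenever x ∈ f^∞R and y ∈ f^{−∞}0. -/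
open Pointwise

section aux

variable {R : Type*} [Ring R] (f : R →+ R)

private lemma fit_anti {n m : ℕ} (h : n ≤ m) :
    Set.range (⇑f)^[m] ⊆ Set.range (⇑f)^[n] := by
  obtain ⟨k, rfl⟩ := Nat.exists_eq_add_of_le h
  rintro x ⟨y, rfl⟩
  exact ⟨(⇑f)^[k] y, (Function.iterate_add_apply _ n k y).symm⟩

private lemma fit_mono {n m : ℕ} (h : n ≤ m) :
    {x : R | (⇑f)^[n] x = 0} ⊆ {x : R | (⇑f)^[m] x = 0} := by
  obtain ⟨k, rfl⟩ := Nat.exists_eq_add_of_le h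
  intro x hx
  simp only [Set.mem_setOf_eq] at hx ⊢
  rw [add_comm, Function.iterate_add_apply, hx, iterate_map_zero]

end aux

/-- **Fitting decomposition for rings** (Lemma A.1 of the paper).
Let `R` be a ring that is both left-Artinian and left-Noetherian, and let
`f : R → R` be an endomorphism of its additive group such that for every `n`
both the image of `f^n` and the kernel of `f^n` are two-sided ideals of `R`.
Writing `f^∞R = ⋂ₙ f^n(R)` and `f^{-∞}0 = ⋃ₙ ker(f^n)`, we have
`f^∞R ∩ f^{-∞}0 = {0}` and `f^∞R + f^{-∞}0 = R`; consequently every element of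
`R` is uniquely a sum of an element of `f^∞R` and an element of `f^{-∞}0`, and
`x·y = 0 = y·x` whenever `x ∈ f^∞R`, `y ∈ f^{-∞}0`. -/
theorem ring_fitting_decomposition (R : Type*) [Ring R]
    [IsArtinianRing R] [IsNoetherianRing R] (f : R →+ R)
    (hrange : ∀ n : ℕ, ∃ I : TwoSidedIdeal R, (I : Set R) = Set.range (⇑f)^[n])
    (hker : ∀ n : ℕ, ∃ I : TwoSidedIdeal R, (I : Set R) = {x : R | (⇑f)^[n] x = 0}) :
    ((⋂ n : ℕ, Set.range (⇑f)^[n]) ∩ (⋃ n : ℕ, {x : R | (⇑f)^[n] x = 0}) = {0}) ∧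
    ((⋂ n : ℕ, Set.range (⇑f)^[n]) + (⋃ n : ℕ, {x : R | (⇑f)^[n] x = 0}) = Set.univ) ∧
    (∀ x : R, ∃! q : R × R,
        q.1 ∈ (⋂ n : ℕ, Set.range (⇑f)^[n]) ∧
        q.2 ∈ (⋃ n : ℕ, {x : R | (⇑f)^[n] x = 0}) ∧ x = q.1 + q.2) ∧
    (∀ x y : R, x ∈ (⋂ n : ℕ, Set.range (⇑f)^[n]) →
        y ∈ (⋃ n : ℕ, {x : R | (⇑f)^[n] x = 0}) → x * y = 0 ∧ y * x = 0) := by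
  classical
  choose I hI using hrange
  choose K hK using hker
  -- stabilization of the images (Artinian)
  obtain ⟨N₁, hN₁⟩ := IsArtinian.monotone_stabilizes (R := R) (M := R)
    ⟨fun n => TwoSidedIdeal.asIdeal (I n), by
      intro n m h
      show TwoSidedIdeal.asIdeal (I m) ≤ TwoSidedIdeal.asIdeal (I n)
      intro x hx
      rw [TwoSidedIdeal.mem_asIdeal, ← SetLike.mem_coe, hI] at hx
      rw [TwoSidedIdeal.mem_asIdeal, ← SetLike.mem_coe, hI]
      exact fit_anti f h hx⟩
  have hrangeStab : ∀ m, N₁ ≤ m → Set.range (⇑f)^[N₁] = Set.range (⇑f)^[m] := by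
    intro m hm
    have h0 : TwoSidedIdeal.asIdeal (I N₁) = TwoSidedIdeal.asIdeal (I m) := hN₁ m hm
    have : (TwoSidedIdeal.asIdeal (I N₁) : Set R) = (TwoSidedIdeal.asIdeal (I m) : Set R) :=
      congrArg SetLike.coe h0
    rwa [TwoSidedIdeal.coe_asIdeal, TwoSidedIdeal.coe_asIdeal, hI, hI] at this
  -- stabilization of the kernels (Noetherian)
  obtain ⟨N₂, hN₂⟩ := monotone_stabilizes_iff_noetherian.mpr
    (inferInstance : IsNoetherian R R)
    ⟨fun n => TwoSidedIdeal.asIdeal (K n), by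
      intro n m h x hx
      rw [TwoSidedIdeal.mem_asIdeal, ← SetLike.mem_coe, hK] at hx
      rw [TwoSidedIdeal.mem_asIdeal, ← SetLike.mem_coe, hK]
      exact fit_mono f h hx⟩
  have hkerStab : ∀ m, N₂ ≤ m → {x : R | (⇑f)^[N₂] x = 0} = {x : R | (⇑f)^[m] x = 0} := by
    intro m hm
    have h0 : TwoSidedIdeal.asIdeal (K N₂) = TwoSidedIdeal.asIdeal (K m) := hN₂ m hm
    have : (TwoSidedIdeal.asIdeal (K N₂) : Set R) = (TwoSidedIdeal.asIdeal (K m) : Set R) :=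
      congrArg SetLike.coe h0
    rwa [TwoSidedIdeal.coe_asIdeal, TwoSidedIdeal.coe_asIdeal, hK, hK] at this
  set A : Set R := ⋂ n : ℕ, Set.range (⇑f)^[n] with hA
  set B : Set R := ⋃ n : ℕ, {x : R | (⇑f)^[n] x = 0} with hB
  -- intersection is {0}
  have hcap : A ∩ B = {0} := by
    apply Set.eq_singleton_iff_unique_mem.mpr
    constructor
    · constructor
      · exact Set.mem_iInter.mpr fun n => ⟨0, iterate_map_zero f n⟩
      · exact Set.mem_iUnion.mpr ⟨0, iterate_map_zero f 0⟩
    · rintro x ⟨hxA, hxB⟩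
      obtain ⟨m, hm⟩ := Set.mem_iUnion.mp hxB
      -- x ∈ range f^[M] where M = max N₂ m... take M = N₂ + m? use M ≥ N₂
      obtain ⟨y, hy⟩ := Set.mem_iInter.mp hxA (N₂ + m)
      -- f^[m] x = 0 so f^[N₂ + m + m] y = 0, hence y ∈ ker f^[N₂+m]
      have h1 : (⇑f)^[m + (N₂ + m)] y = 0 := by
        rw [Function.iterate_add_apply, hy]; exact hm
      have e : {x : R | (⇑f)^[N₂ + m] x = 0} = {x : R | (⇑f)^[m + (N₂ + m)] x = 0} :=
        (hkerStab (N₂ + m) (Nat.le_add_right _ _)).symm.trans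
          (hkerStab (m + (N₂ + m)) (le_trans (Nat.le_add_right _ _) (Nat.le_add_left _ _)))
      have h2 : y ∈ {x : R | (⇑f)^[N₂ + m] x = 0} := by rw [e]; exact h1
      rw [← hy]; exact h2
  -- every element decomposes
  have hdecomp : ∀ x : R, ∃ a b : R, a ∈ A ∧ b ∈ B ∧ x = a + b := by
    intro x
    have h1 : (⇑f)^[N₁] x ∈ Set.range (⇑f)^[N₁ + N₁] := by
      rw [← hrangeStab (N₁ + N₁) (Nat.le_add_right _ _)]
      exact ⟨x, rfl⟩
    obtain ⟨y, hy⟩ := h1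
    refine ⟨(⇑f)^[N₁] y, x - (⇑f)^[N₁] y, ?_, ?_, by abel⟩
    · refine Set.mem_iInter.mpr fun n => ?_
      rcases le_total n N₁ with h | h
      · exact fit_anti f h ⟨y, rfl⟩
      · rw [← hrangeStab n h]; exact ⟨y, rfl⟩
    · refine Set.mem_iUnion.mpr ⟨N₁, ?_⟩
      show (⇑f)^[N₁] (x - (⇑f)^[N₁] y) = 0
      rw [iterate_map_sub, ← Function.iterate_add_apply, hy, sub_self]
  refine ⟨hcap, ?_, ?_, ?_⟩
  · -- sum is univ
    apply Set.eq_univ_of_forall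
    intro x
    obtain ⟨a, b, ha, hb, hx⟩ := hdecomp x
    exact ⟨a, ha, b, hb, hx.symm⟩
  · -- unique decomposition
    intro x
    obtain ⟨a, b, ha, hb, hx⟩ := hdecomp x
    refine ⟨(a, b), ⟨ha, hb, hx⟩, ?_⟩
    rintro ⟨a', b'⟩ ⟨ha', hb', hx'⟩
    simp only at ha' hb' hx' ⊢
    have hd : a' - a ∈ A := Set.mem_iInter.mpr fun n => by
      obtain ⟨y, hy⟩ := Set.mem_iInter.mp ha' n
      obtain ⟨z, hz⟩ := Set.mem_iInter.mp ha n
      exact ⟨y - z, by rw [iterate_map_sub, hy, hz]⟩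
    have hd' : a' - a ∈ B := by
      obtain ⟨m, hm⟩ := Set.mem_iUnion.mp hb
      obtain ⟨m', hm'⟩ := Set.mem_iUnion.mp hb'
      have hab : a' - a = b - b' := by
        have h := hx.symm.trans hx'
        rw [sub_eq_sub_iff_add_eq_add]
        exact h.symm.trans (add_comm a b)
      refine Set.mem_iUnion.mpr ⟨m + m', ?_⟩
      show (⇑f)^[m + m'] (a' - a) = 0
      rw [hab, iterate_map_sub]
      have h1 : (⇑f)^[m + m'] b = 0 := fit_mono f (Nat.le_add_right _ _) hm
      have h2 : (⇑f)^[m + m'] b' = 0 := fit_mono f (Nat.le_add_left _ _) hm'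
      rw [h1, h2, sub_self]
    have : a' - a ∈ ({0} : Set R) := hcap ▸ ⟨hd, hd'⟩
    have haa : a' = a := sub_eq_zero.mp (Set.mem_singleton_iff.mp this)
    have hbb : b' = b := by
      have := hx.symm.trans hx'
      rw [haa] at this
      exact (add_left_cancel this).symm
    exact Prod.ext haa hbb
  · -- products vanish
    intro x y hx hy
    obtain ⟨m, hm⟩ := Set.mem_iUnion.mp hy
    have hyK : y ∈ K m := by rw [← SetLike.mem_coe, hK]; exact hm
    have hxy : ∀ z w : R, z ∈ A → w ∈ K m → z * w ∈ A ∩ B ∧ w * z ∈ A ∩ B := by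
      intro z w hz hw
      constructor
      · constructor
        · refine Set.mem_iInter.mpr fun n => ?_
          have hzI : z ∈ I n := by
            rw [← SetLike.mem_coe, hI]; exact Set.mem_iInter.mp hz n
          have : z * w ∈ I n := TwoSidedIdeal.mul_mem_right _ _ _ hzI
          rwa [← SetLike.mem_coe, hI] at this
        · refine Set.mem_iUnion.mpr ⟨m, ?_⟩
          have : z * w ∈ K m := TwoSidedIdeal.mul_mem_left _ _ _ hw
          rwa [← SetLike.mem_coe, hK] at this
      · constructor
        · refine Set.mem_iInter.mpr fun n => ?_
          have hzI : z ∈ I n := by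
            rw [← SetLike.mem_coe, hI]; exact Set.mem_iInter.mp hz n
          have : w * z ∈ I n := TwoSidedIdeal.mul_mem_left _ _ _ hzI
          rwa [← SetLike.mem_coe, hI] at this
        · refine Set.mem_iUnion.mpr ⟨m, ?_⟩
          have : w * z ∈ K m := TwoSidedIdeal.mul_mem_right _ _ _ hw
          rwa [← SetLike.mem_coe, hK] at this
    obtain ⟨h1, h2⟩ := hxy x y hx hyK
    constructor
    · exact Set.mem_singleton_iff.mp (hcap ▸ h1)
    · exact Set.mem_singleton_iff.mp (hcap ▸ h2)
end

section
/- Let k be a field, let n and m be natural numbers, and let R_1, …, R_n and Q_1, …, Q_m be families of nonzero finite-dimensional non-unital associative k-algebras, each of which is indecomposable. If the product algebras R_1 × R_2 × ⋯ × R_n and Q_1 × Q_2 × ⋯ × Q_m are isomorphic as non-unital k-algebras, then n = m and there exists a bijection σ : {1,…,n} → {1,…,m} such that R_i is isomorphic to Q_{σ(i)} as a non-unital k-algebra for every i. -/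
universe u

/-- A bundled nonzero-or-not non-unital (associative) `k`-algebra: a `k`-vector
space with an associative `k`-bilinear multiplication (no unit required). -/
structure NuAlgebra (k : Type u) [CommRing k] : Type (u + 1) where
  carrier : Type u
  [instNonUnitalRing : NonUnitalRing carrier]
  [instModule : Module k carrier]
  [instSMulCommClass : SMulCommClass k carrier carrier]
  [instIsScalarTower : IsScalarTower k carrier carrier]

attribute [instance] NuAlgebra.instNonUnitalRing NuAlgebra.instModule
  NuAlgebra.instSMulCommClass NuAlgebra.instIsScalarTower

/-- Two non-unital `k`-algebras are isomorphic if there is a multiplicative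
`k`-linear equivalence between them. -/
def NuAlgIso (k : Type u) [CommRing k] (A B : Type u)
    [NonUnitalRing A] [Module k A] [NonUnitalRing B] [Module k B] : Prop :=
  ∃ e : A ≃ₗ[k] B, ∀ x y : A, e (x * y) = e x * e y

/-- A non-unital `k`-algebra is decomposable if it is isomorphic, as a non-unital
`k`-algebra, to a product (with componentwise operations) of two nonzero
non-unital `k`-algebras. -/
def IsDecomposableAlg (k : Type u) [CommRing k] (A : Type u)
    [NonUnitalRing A] [Module k A] : Prop :=
  ∃ B C : NuAlgebra k, Nontrivial B.carrier ∧ Nontrivial C.carrier ∧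
    NuAlgIso k A (B.carrier × C.carrier)

set_option linter.unusedSectionVars false
set_option linter.unusedVariables false

namespace KS

theorem iso_trans {k : Type u} [CommRing k] {A B C : Type u} [NonUnitalRing A] [Module k A]
    [NonUnitalRing B] [Module k B] [NonUnitalRing C] [Module k C]
    (h : NuAlgIso k A B) (h' : NuAlgIso k B C) : NuAlgIso k A C := by
  obtain ⟨e, he⟩ := h; obtain ⟨f, hf⟩ := h'
  exact ⟨e.trans f, fun x y => by simp [he, hf]⟩

theorem iso_of_mul_equiv {k : Type u} [CommRing k] {A B : Type u} [NonUnitalRing A] [Module k A]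
    [NonUnitalRing B] [Module k B] (e : A ≃ₗ[k] B) (he : ∀ x y : A, e (x * y) = e x * e y) :
    NuAlgIso k B A := by
  refine ⟨e.symm, fun x y => e.injective ?_⟩
  rw [he, e.apply_symm_apply, e.apply_symm_apply, e.apply_symm_apply]

section Bi

variable {k : Type u} [Field k]
variable {A : Type u} [NonUnitalRing A] [Module k A] [SMulCommClass k A A] [IsScalarTower k A A]

/-- `f` commutes with left and right multiplications (a "bimodule" endomorphism). -/
def IsBi (f : Module.End k A) : Prop :=
  ∀ a x : A, f (a * x) = a * f x ∧ f (x * a) = f x * a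

theorem IsBi.one : IsBi (1 : Module.End k A) := fun _ _ => ⟨rfl, rfl⟩

theorem IsBi.mul {f g : Module.End k A} (hf : IsBi f) (hg : IsBi g) : IsBi (f * g) := by
  intro a x
  constructor
  · show f (g (a * x)) = a * f (g x)
    rw [(hg a x).1, (hf a (g x)).1]
  · show f (g (x * a)) = f (g x) * a
    rw [(hg a x).2, (hf a (g x)).2]

theorem IsBi.add {f g : Module.End k A} (hf : IsBi f) (hg : IsBi g) : IsBi (f + g) := by
  intro a x
  constructor
  · show f (a * x) + g (a * x) = a * (f x + g x)
    rw [(hf a x).1, (hg a x).1, mul_add]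
  · show f (x * a) + g (x * a) = (f x + g x) * a
    rw [(hf a x).2, (hg a x).2, add_mul]

theorem IsBi.pow {f : Module.End k A} (hf : IsBi f) (n : ℕ) : IsBi (f ^ n) := by
  induction n with
  | zero => simpa using IsBi.one
  | succ n ih => rw [pow_succ]; exact ih.mul hf

theorem IsBi.sum {s : Finset (Fin m)} {f : Fin m → Module.End k A} (hf : ∀ j, IsBi (f j)) :
    IsBi (∑ j ∈ s, f j) := by
  intro a x
  constructor
  · simp only [LinearMap.sum_apply]
    rw [Finset.mul_sum]
    exact Finset.sum_congr rfl fun j _ => (hf j a x).1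
  · simp only [LinearMap.sum_apply]
    rw [Finset.sum_mul]
    exact Finset.sum_congr rfl fun j _ => (hf j a x).2

theorem unit_inv_apply {f : Module.End k A} (h : IsUnit f) (z : A) :
    f ((↑h.unit⁻¹ : Module.End k A) z) = z := by
  have h2 : (↑h.unit : Module.End k A) ((↑h.unit⁻¹ : Module.End k A) z) = z :=
    DFunLike.congr_fun h.unit.mul_inv z
  rwa [h.unit_spec] at h2

theorem unit_inv_apply' {f : Module.End k A} (h : IsUnit f) (z : A) :
    (↑h.unit⁻¹ : Module.End k A) (f z) = z := by
  have h2 : (↑h.unit⁻¹ : Module.End k A) ((↑h.unit : Module.End k A) z) = z :=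
    DFunLike.congr_fun h.unit.inv_mul z
  rwa [h.unit_spec] at h2

theorem IsBi.unitInv {f : Module.End k A} (hf : IsBi f) (h : IsUnit f) :
    IsBi (↑h.unit⁻¹ : Module.End k A) := by
  have hinj : Function.Injective f := ((Module.End.isUnit_iff f).mp h).injective
  intro a x
  refine ⟨hinj ?_, hinj ?_⟩
  · rw [unit_inv_apply h, (hf a _).1, unit_inv_apply h]
  · rw [unit_inv_apply h, (hf a _).2, unit_inv_apply h]

/-- Package a multiplicatively closed submodule as a non-unital subalgebra. -/
def mkIdeal (p : Submodule k A) (h : ∀ x ∈ p, ∀ y ∈ p, x * y ∈ p) :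
    NonUnitalSubalgebra k A where
  carrier := p
  add_mem' := fun hx hy => p.add_mem hx hy
  zero_mem' := p.zero_mem
  mul_mem' := fun hx hy => h _ hx _ hy
  smul_mem' := fun c {x} hx => p.smul_mem c hx

theorem mem_mkIdeal {p : Submodule k A} {h} {x : A} : x ∈ mkIdeal p h ↔ x ∈ p := Iff.rfl

theorem toSubmodule_mkIdeal {p : Submodule k A} {h} :
    (mkIdeal p h).toSubmodule = p := by
  ext x; exact Iff.rfl

/-- Core lemma: for a bimodule endomorphism with complementary kernel and range
of an indecomposable algebra, the kernel or the range is trivial. -/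
theorem ker_eq_bot_or_range_eq_bot (hA : ¬ IsDecomposableAlg k A) {g : Module.End k A}
    (hg : IsBi g) (hc : IsCompl (LinearMap.ker g) (LinearMap.range g)) :
    LinearMap.ker g = ⊥ ∨ LinearMap.range g = ⊥ := by
  by_contra hcon
  push_neg at hcon
  obtain ⟨hp, hq⟩ := hcon
  apply hA
  set p := LinearMap.ker g with hpdef
  set q := LinearMap.range g with hqdef
  have hpmul : ∀ x ∈ p, ∀ y ∈ p, x * y ∈ p := by
    intro x hx y _
    have : g (x * y) = g x * y := (hg y x).2
    rw [LinearMap.mem_ker] at hx ⊢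
    rw [this, hx, zero_mul]
  have hqmul : ∀ x ∈ q, ∀ y ∈ q, x * y ∈ q := by
    rintro x ⟨a, rfl⟩ y ⟨b, rfl⟩
    exact ⟨g a * b, (hg (g a) b).1⟩
  -- annihilation
  have hann : ∀ x ∈ p, ∀ y ∈ q, x * y = 0 ∧ y * x = 0 := by
    rintro x hx y ⟨b, rfl⟩
    have hx' : g x = 0 := LinearMap.mem_ker.mp hx
    constructor
    · have h1 : x * g b ∈ p := by
        rw [LinearMap.mem_ker, (hg (g b) x).2, hx', zero_mul]
      have h2 : x * g b ∈ q := ⟨x * b, (hg x b).1⟩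
      have := hc.disjoint
      rw [disjoint_iff_inf_le] at this
      exact (Submodule.mem_bot k).mp (this ⟨h1, h2⟩)
    · have h1 : g b * x ∈ p := by
        rw [LinearMap.mem_ker, (hg (g b) x).1, hx', mul_zero]
      have h2 : g b * x ∈ q := ⟨b * x, (hg x b).2⟩
      have := hc.disjoint
      rw [disjoint_iff_inf_le] at this
      exact (Submodule.mem_bot k).mp (this ⟨h1, h2⟩)
  set S₁ := mkIdeal p hpmul
  set S₂ := mkIdeal q hqmul
  have hc' : IsCompl S₁.toSubmodule S₂.toSubmodule := by
    rw [show S₁.toSubmodule = p from toSubmodule_mkIdeal,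
      show S₂.toSubmodule = q from toSubmodule_mkIdeal]
    exact hc
  have hnt1 : Nontrivial S₁ := by
    obtain ⟨x, hx, hx0⟩ := Submodule.exists_mem_ne_zero_of_ne_bot hp
    exact ⟨⟨x, hx⟩, 0, by simpa [Subtype.ext_iff] using hx0⟩
  have hnt2 : Nontrivial S₂ := by
    obtain ⟨x, hx, hx0⟩ := Submodule.exists_mem_ne_zero_of_ne_bot hq
    exact ⟨⟨x, hx⟩, 0, by simpa [Subtype.ext_iff] using hx0⟩
  -- the linear equivalence (S₁ × S₂) ≃ A given by addition
  refine ⟨⟨S₁⟩, ⟨S₂⟩, hnt1, hnt2, ?_⟩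
  refine iso_of_mul_equiv (k := k)
    ((Submodule.prodEquivOfIsCompl S₁.toSubmodule S₂.toSubmodule hc' :
      (↥S₁.toSubmodule × ↥S₂.toSubmodule) ≃ₗ[k] A) : (↥S₁ × ↥S₂) ≃ₗ[k] A) ?_
  intro x y
  have hx1 : (x.1 : A) ∈ p := x.1.2
  have hx2 : (x.2 : A) ∈ q := x.2.2
  have hy1 : (y.1 : A) ∈ p := y.1.2
  have hy2 : (y.2 : A) ∈ q := y.2.2
  show (Submodule.prodEquivOfIsCompl S₁.toSubmodule S₂.toSubmodule hc') _
    = (Submodule.prodEquivOfIsCompl S₁.toSubmodule S₂.toSubmodule hc') _ *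
      (Submodule.prodEquivOfIsCompl S₁.toSubmodule S₂.toSubmodule hc') _
  rw [Submodule.coe_prodEquivOfIsCompl', Submodule.coe_prodEquivOfIsCompl',
    Submodule.coe_prodEquivOfIsCompl']
  show ((x.1 * y.1 : ↥S₁) : A) + ((x.2 * y.2 : ↥S₂) : A) = _
  have c1 : (x.1 : A) * (y.2 : A) = 0 := (hann _ hx1 _ hy2).1
  have c2 : (x.2 : A) * (y.1 : A) = 0 := (hann _ hy1 _ hx2).2
  push_cast
  rw [add_mul, mul_add, mul_add, c1, c2]
  abel
end Bi

section Local

variable {k : Type u} [Field k]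
variable {A : Type u} [NonUnitalRing A] [Module k A] [SMulCommClass k A A] [IsScalarTower k A A]
variable [FiniteDimensional k A]

theorem isUnit_or_isNilpotent [Nontrivial A] (hA : ¬ IsDecomposableAlg k A)
    {f : Module.End k A} (hf : IsBi f) : IsUnit f ∨ IsNilpotent f := by
  obtain ⟨n₀, hn₀⟩ := Filter.eventually_atTop.mp (f.eventually_isCompl_ker_pow_range_pow)
  set n := n₀ + 1 with hn
  have hcompl := hn₀ n (Nat.le_add_right _ _)
  rcases ker_eq_bot_or_range_eq_bot hA (hf.pow n) hcompl with h | h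
  · left
    rw [Module.End.isUnit_iff]
    have hinj : Function.Injective (f ^ n) := by
      rw [← LinearMap.ker_eq_bot]; exact h
    have hinjf : Function.Injective f := by
      intro x y hxy
      apply hinj
      have : (f ^ n) = (f ^ n₀) * f := by rw [hn, pow_succ]
      rw [this]
      show (f ^ n₀) (f x) = (f ^ n₀) (f y)
      rw [hxy]
    exact ⟨hinjf, (LinearMap.injective_iff_surjective).mp hinjf⟩
  · right
    exact ⟨n, LinearMap.range_eq_bot.mp h⟩

theorem eq_zero_or_eq_one_of_idem [Nontrivial A] (hA : ¬ IsDecomposableAlg k A)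
    {w : Module.End k A} (hw : IsBi w) (hidem : w * w = w) : w = 0 ∨ w = 1 := by
  have happ : ∀ x, w (w x) = w x := fun x => DFunLike.congr_fun hidem x
  have hcompl : IsCompl (LinearMap.ker w) (LinearMap.range w) := by
    constructor
    · rw [disjoint_iff_inf_le]
      rintro x ⟨hx1, y, rfl⟩
      have : w (w y) = 0 := hx1
      rw [happ] at this
      simp [this]
    · rw [codisjoint_iff_le_sup]
      intro x _
      have hx : x = (x - w x) + w x := by abel
      rw [hx]
      exact Submodule.add_mem_sup (by simp [LinearMap.mem_ker, map_sub, happ])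
        (LinearMap.mem_range_self w x)
  rcases ker_eq_bot_or_range_eq_bot hA hw hcompl with h | h
  · right
    have hinj : Function.Injective w := by rw [← LinearMap.ker_eq_bot]; exact h
    ext x
    exact hinj (by rw [happ]; rfl)
  · left
    exact LinearMap.range_eq_bot.mp h

theorem isUnit_of_isUnit_add [Nontrivial A] (hA : ¬ IsDecomposableAlg k A)
    {f g : Module.End k A} (hf : IsBi f) (hg : IsBi g) (h : IsUnit (f + g)) :
    IsUnit f ∨ IsUnit g := by
  by_cases hfu : IsUnit f
  · exact Or.inl hfu
  right
  have hubi : IsBi (f + g) := hf.add hg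
  set v : Module.End k A := ↑h.unit⁻¹ with hv
  have hvbi : IsBi v := hubi.unitInv h
  have hp : IsBi (v * f) := hvbi.mul hf
  have hpnu : ¬ IsUnit (v * f) := by
    intro hc
    apply hfu
    have hfe : f = ↑h.unit * (v * f) := by
      rw [← mul_assoc, hv, h.unit.mul_inv, one_mul]
    rw [hfe]
    exact h.unit.isUnit.mul hc
  have hnil : IsNilpotent (v * f) := (isUnit_or_isNilpotent hA hp).resolve_left hpnu
  have hq : v * g = 1 - v * f := by
    calc v * g = v * ((f + g) - f) := by rw [add_sub_cancel_left]
    _ = v * (f + g) - v * f := by rw [mul_sub]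
    _ = v * ↑h.unit - v * f := by rw [h.unit_spec]
    _ = 1 - v * f := by rw [hv, h.unit.inv_mul]
  have hqu : IsUnit (v * g) := by rw [hq]; exact hnil.isUnit_one_sub
  have hge : g = ↑h.unit * (v * g) := by
    rw [← mul_assoc, hv, h.unit.mul_inv, one_mul]
  rw [hge]
  exact h.unit.isUnit.mul hqu

theorem nontrivial_end [Nontrivial A] : Nontrivial (Module.End k A) := by
  obtain ⟨x, hx0⟩ := exists_ne (0 : A)
  refine ⟨0, 1, fun hc => hx0 ?_⟩
  have := DFunLike.congr_fun hc x
  simpa using this.symm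

theorem isUnit_of_sum [Nontrivial A] (hA : ¬ IsDecomposableAlg k A) {m : ℕ}
    (f : Fin m → Module.End k A) (hf : ∀ j, IsBi (f j)) (hsum : ∑ j, f j = 1) :
    ∃ j, IsUnit (f j) := by
  have hnt : Nontrivial (Module.End k A) := nontrivial_end
  have key : ∀ s : Finset (Fin m), IsUnit (∑ j ∈ s, f j) → ∃ j ∈ s, IsUnit (f j) := by
    intro s
    induction s using Finset.induction_on with
    | empty =>
      intro hx
      rw [Finset.sum_empty] at hx
      exact absurd hx not_isUnit_zero
    | insert _ _ hnotmem ih =>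
      intro hx
      rw [Finset.sum_insert hnotmem] at hx
      rcases isUnit_of_isUnit_add hA (hf _) (IsBi.sum hf) hx with h1 | h2
      · exact ⟨_, Finset.mem_insert_self _ _, h1⟩
      · obtain ⟨j, hj, hju⟩ := ih h2
        exact ⟨j, Finset.mem_insert_of_mem hj, hju⟩
  obtain ⟨j, _, hj⟩ := key Finset.univ (by rw [hsum]; exact isUnit_one)
  exact ⟨j, hj⟩

end Local

section Exchange

variable {k : Type u} [Field k]

theorem exchange {m : ℕ} (A B : Type u)
    [NonUnitalRing A] [Module k A] [SMulCommClass k A A] [IsScalarTower k A A]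
    [NonUnitalRing B] [Module k B] [SMulCommClass k B B] [IsScalarTower k B B]
    (Q : Fin (m + 1) → Type u)
    [∀ j, NonUnitalRing (Q j)] [∀ j, Module k (Q j)]
    [∀ j, SMulCommClass k (Q j) (Q j)] [∀ j, IsScalarTower k (Q j) (Q j)]
    (hAnt : Nontrivial A) (hAfd : FiniteDimensional k A) (hAind : ¬ IsDecomposableAlg k A)
    (hQnt : ∀ j, Nontrivial (Q j)) (hQfd : ∀ j, FiniteDimensional k (Q j))
    (hQind : ∀ j, ¬ IsDecomposableAlg k (Q j))
    (h : NuAlgIso k (A × B) (∀ j, Q j)) :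
    ∃ j₀ : Fin (m + 1), NuAlgIso k A (Q j₀) ∧
      NuAlgIso k B (∀ j : Fin m, Q (j₀.succAbove j)) := by
  haveI := hAnt
  haveI := hAfd
  haveI : ∀ j, Nontrivial (Q j) := hQnt
  haveI : ∀ j, FiniteDimensional k (Q j) := hQfd
  obtain ⟨e, he⟩ := h
  have he' : ∀ u v, e.symm (u * v) = e.symm u * e.symm v := fun u v =>
    e.injective (by rw [he, e.apply_symm_apply, e.apply_symm_apply, e.apply_symm_apply])
  set jA : A →ₗ[k] ∀ j, Q j := e.toLinearMap ∘ₗ LinearMap.inl k A B with hjAdef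
  set jB : B →ₗ[k] ∀ j, Q j := e.toLinearMap ∘ₗ LinearMap.inr k A B with hjBdef
  set πN : (∀ j, Q j) →ₗ[k] A := LinearMap.fst k A B ∘ₗ e.symm.toLinearMap with hπNdef
  have hjA : ∀ a : A, jA a = e (a, 0) := fun a => rfl
  have hjB : ∀ b : B, jB b = e (0, b) := fun b => rfl
  have hπN : ∀ w, πN w = (e.symm w).1 := fun w => rfl
  have hjA_mul : ∀ x y : A, jA (x * y) = jA x * jA y := by
    intro x y
    rw [hjA, hjA, hjA, ← he]
    congr 1
    show ((x * y : A), (0 : B)) = (x, 0) * (y, 0)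
    rw [Prod.mk_mul_mk, mul_zero]
  have hjB_mul : ∀ x y : B, jB (x * y) = jB x * jB y := by
    intro x y
    rw [hjB, hjB, hjB, ← he]
    congr 1
    show ((0 : A), x * y) = (0, x) * (0, y)
    rw [Prod.mk_mul_mk, mul_zero]
  have hπN_mul : ∀ u v, πN (u * v) = πN u * πN v := by
    intro u v
    rw [hπN, hπN, hπN, he']
    rfl
  have habsL : ∀ (a : A) (w), πN (jA a * w) = a * πN w := by
    intro a w
    have h1 : jA a * w = e ((a, 0) * e.symm w) := by
      rw [he, e.apply_symm_apply, hjA]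
    rw [h1, hπN, e.symm_apply_apply]
    show ((a, 0) * e.symm w).1 = a * (e.symm w).1
    rfl
  have habsR : ∀ (a : A) (w), πN (w * jA a) = πN w * a := by
    intro a w
    have h1 : w * jA a = e (e.symm w * (a, 0)) := by
      rw [he, e.apply_symm_apply, hjA]
    rw [h1, hπN, e.symm_apply_apply]
    show (e.symm w * (a, 0)).1 = (e.symm w).1 * a
    rfl
  have habs_jA_L : ∀ (w) (z : A), w * jA z = jA (πN w * z) := by
    intro w z
    rw [hjA, hjA, hπN]
    conv_lhs => rw [← e.apply_symm_apply w]
    rw [← he]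
    congr 1
    refine Prod.ext rfl ?_
    show (e.symm w).2 * 0 = (0 : B)
    rw [mul_zero]
  have habs_jA_R : ∀ (w) (z : A), jA z * w = jA (z * πN w) := by
    intro w z
    rw [hjA, hjA, hπN]
    conv_lhs => rw [← e.apply_symm_apply w]
    rw [← he]
    congr 1
    refine Prod.ext rfl ?_
    show (0 : B) * (e.symm w).2 = (0 : B)
    rw [zero_mul]
  set hmap : Fin (m + 1) → Module.End k A := fun j =>
    πN ∘ₗ (LinearMap.single k Q j ∘ₗ (LinearMap.proj j ∘ₗ jA)) with hmapdef
  have hmap_apply : ∀ j a, hmap j a = πN (Pi.single j (jA a j)) := fun j a => rfl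
  have hsum : ∑ j, hmap j = 1 := by
    ext a
    show (∑ j, hmap j) a = a
    calc (∑ j, hmap j) a = ∑ j, πN (Pi.single j (jA a j)) := by
          rw [LinearMap.sum_apply]
          exact Finset.sum_congr rfl fun j _ => rfl
      _ = πN (∑ j, Pi.single j (jA a j)) := (map_sum πN _ Finset.univ).symm
      _ = πN (jA a) := by rw [Finset.univ_sum_single]
      _ = a := by rw [hπN, hjA, e.symm_apply_apply]
  have hbi : ∀ j, IsBi (hmap j) := by
    intro j a x
    constructor
    · rw [hmap_apply, hmap_apply, hjA_mul, Pi.mul_apply, Pi.single_mul_right, habsL]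
    · rw [hmap_apply, hmap_apply, hjA_mul, Pi.mul_apply, Pi.single_mul_left, habsR]
  obtain ⟨j₀, hu⟩ := isUnit_of_sum hAind hmap hbi hsum
  set u := hmap j₀ with hudef
  set α : A →ₗ[k] Q j₀ := LinearMap.proj j₀ ∘ₗ jA with hαdef
  set β : Q j₀ →ₗ[k] A := πN ∘ₗ LinearMap.single k Q j₀ with hβdef
  have hβ : ∀ q, β q = πN (Pi.single j₀ q) := fun q => rfl
  have hβα : ∀ x, β (α x) = u x := fun x => rfl
  set v : Module.End k A := ↑hu.unit⁻¹ with hvdef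
  have hvbi : IsBi v := (hbi j₀).unitInv hu
  have hvu : ∀ z, v (u z) = z := unit_inv_apply' hu
  have huv : ∀ z, u (v z) = z := unit_inv_apply hu
  set w : Module.End k (Q j₀) := α ∘ₗ (v ∘ₗ β) with hwdef
  have hw_apply : ∀ q, w q = α (v (β q)) := fun q => rfl
  have hw_idem : w * w = w := by
    ext q
    show α (v (β (α (v (β q))))) = α (v (β q))
    rw [hβα, huv]
  have hG_L : ∀ m₁ m₂ : ∀ j, Q j, jA (v (πN (m₁ * m₂))) = m₁ * jA (v (πN m₂)) := by
    intro m₁ m₂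
    rw [hπN_mul, (hvbi (πN m₁) (πN m₂)).1]
    exact (habs_jA_L _ _).symm
  have hG_R : ∀ m₁ m₂ : ∀ j, Q j, jA (v (πN (m₁ * m₂))) = jA (v (πN m₁)) * m₂ := by
    intro m₁ m₂
    rw [hπN_mul, (hvbi (πN m₂) (πN m₁)).2]
    exact (habs_jA_R _ _).symm
  have hw_single : ∀ q : Q j₀, w q = (jA (v (πN (Pi.single j₀ q)))) j₀ := fun q => rfl
  have hw_bi : IsBi w := by
    intro a x
    constructor
    · rw [hw_single, hw_single, Pi.single_mul, hG_L, Pi.mul_apply, Pi.single_eq_same]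
    · rw [hw_single, hw_single, Pi.single_mul, hG_R, Pi.mul_apply, Pi.single_eq_same]
  have hw_ne : w ≠ 0 := by
    obtain ⟨a, ha⟩ := exists_ne (0 : A)
    intro hc
    have h1 : β (w (α a)) = u a := by
      calc β (w (α a)) = u (v (β (α a))) := hβα _
        _ = u (v (u a)) := by rw [hβα]
        _ = u a := by rw [hvu]
    rw [hc] at h1
    have h2 : u a = 0 := by simpa using h1.symm
    have h3 : a = 0 := by rw [← hvu a, h2, map_zero]
    exact ha h3
  have hw_one : w = 1 :=
    (eq_zero_or_eq_one_of_idem (hQind j₀) hw_bi hw_idem).resolve_left hw_ne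
  have hw_id : ∀ q, α (v (β q)) = q := by
    intro q
    have h1 := DFunLike.congr_fun hw_one q
    rw [← hw_apply]
    simpa using h1
  have hα_inj : Function.Injective α := by
    intro x y hxy
    have h1 : u x = u y := by rw [← hβα, ← hβα, hxy]
    rw [← hvu x, h1, hvu]
  have hα_surj : Function.Surjective α := fun q => ⟨v (β q), hw_id q⟩
  have hα_mul : ∀ x y : A, α (x * y) = α x * α y := by
    intro x y
    show (jA (x * y)) j₀ = (jA x) j₀ * (jA y) j₀
    rw [hjA_mul, Pi.mul_apply]
  have iso1 : NuAlgIso k A (Q j₀) := by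
    refine ⟨LinearEquiv.ofBijective α ⟨hα_inj, hα_surj⟩, fun x y => ?_⟩
    exact hα_mul x y
  set ψ : B →ₗ[k] ∀ j : Fin m, Q (j₀.succAbove j) :=
    LinearMap.pi (fun j => LinearMap.proj (j₀.succAbove j) ∘ₗ jB) with hψdef
  have hψ : ∀ b j, ψ b j = jB b (j₀.succAbove j) := fun b j => rfl
  have hψ_mul : ∀ x y : B, ψ (x * y) = ψ x * ψ y := by
    intro x y
    funext j
    rw [Pi.mul_apply, hψ, hψ, hψ, hjB_mul, Pi.mul_apply]
  have hψ_inj : Function.Injective ψ := by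
    intro b₁ b₂ hb
    have hb0 : ψ (b₁ - b₂) = 0 := by rw [map_sub, hb, sub_self]
    set b := b₁ - b₂ with hbdef
    have hvan : ∀ j, jB b (j₀.succAbove j) = 0 := by
      intro j
      have := congrFun hb0 j
      rwa [hψ] at this
    have hsingle : jB b = Pi.single j₀ (jB b j₀) := by
      funext l
      rcases eq_or_ne l j₀ with rfl | hl
      · rw [Pi.single_eq_same]
      · obtain ⟨j, hj⟩ := Fin.exists_succAbove_eq hl
        rw [Pi.single_eq_of_ne hl, ← hj]
        exact hvan j
    have hβq : β (jB b j₀) = 0 := by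
      have h0 : πN (jB b) = 0 := by rw [hjB, hπN, e.symm_apply_apply]
      rw [hsingle] at h0
      exact h0
    have hq0 : jB b j₀ = 0 := by
      rw [← hw_id (jB b j₀), hβq, map_zero, map_zero]
    have hjBb : jB b = 0 := by rw [hsingle, hq0, Pi.single_zero]
    have hpz : ((0 : A), b) = 0 := by
      apply e.injective
      rw [map_zero]
      exact hjBb
    have hbz : b = 0 := congrArg Prod.snd hpz
    exact sub_eq_zero.mp hbz
  haveI : FiniteDimensional k (A × B) := Module.Finite.equiv e.symm
  haveI : FiniteDimensional k B :=
    Module.Finite.of_surjective (LinearMap.snd k A B) Prod.snd_surjective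
  have hdim : Module.finrank k B = Module.finrank k (∀ j : Fin m, Q (j₀.succAbove j)) := by
    have h1 : Module.finrank k A + Module.finrank k B = Module.finrank k (∀ j, Q j) := by
      rw [← Module.finrank_prod]
      exact LinearEquiv.finrank_eq e
    have h2 : Module.finrank k (∀ j, Q j) = ∑ j, Module.finrank k (Q j) :=
      Module.finrank_pi_fintype k
    have h3 : ∑ j, Module.finrank k (Q j) =
        Module.finrank k (Q j₀) + ∑ j : Fin m, Module.finrank k (Q (j₀.succAbove j)) :=
      Fin.sum_univ_succAbove _ j₀
    have h4 : Module.finrank k A = Module.finrank k (Q j₀) :=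
      (LinearEquiv.ofBijective α ⟨hα_inj, hα_surj⟩).finrank_eq
    have h5 : Module.finrank k (∀ j : Fin m, Q (j₀.succAbove j)) =
        ∑ j : Fin m, Module.finrank k (Q (j₀.succAbove j)) :=
      Module.finrank_pi_fintype k
    omega
  have hψ_surj : Function.Surjective ψ :=
    (LinearMap.injective_iff_surjective_of_finrank_eq_finrank hdim).mp hψ_inj
  refine ⟨j₀, iso1, ⟨LinearEquiv.ofBijective ψ ⟨hψ_inj, hψ_surj⟩, fun x y => ?_⟩⟩
  exact hψ_mul x y

end Exchange

section Assemble

variable {k : Type u} [Field k]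

/-- The linear equivalence `R 0 × (∀ i, R i.succ) ≃ ∀ i, R i` given by `Fin.cons`. -/
def consLEquiv (k : Type u) [Field k] {n : ℕ} (R : Fin (n + 1) → Type u)
    [∀ i, NonUnitalRing (R i)] [∀ i, Module k (R i)] :
    (R 0 × ∀ i : Fin n, R i.succ) ≃ₗ[k] ∀ i, R i where
  toFun x := Fin.cons x.1 x.2
  map_add' x y := funext fun i => Fin.cases (by simp) (fun j => by simp) i
  map_smul' c x := funext fun i => Fin.cases (by simp) (fun j => by simp) i
  invFun f := (f 0, fun i => f i.succ)
  left_inv x := by simp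
  right_inv f := funext fun i => Fin.cases (by simp) (fun j => by simp) i

theorem iso_cons {n : ℕ} (R : Fin (n + 1) → Type u)
    [∀ i, NonUnitalRing (R i)] [∀ i, Module k (R i)] :
    NuAlgIso k (R 0 × ∀ i : Fin n, R i.succ) (∀ i, R i) := by
  refine ⟨consLEquiv k R, fun x y => ?_⟩
  funext i
  refine Fin.cases ?_ (fun j => ?_) i
  · show Fin.cons (x * y).1 (x * y).2 0 = (Fin.cons x.1 x.2 * Fin.cons y.1 y.2 : ∀ i, R i) 0
    simp
  · show Fin.cons (x * y).1 (x * y).2 j.succ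
      = (Fin.cons x.1 x.2 * Fin.cons y.1 y.2 : ∀ i, R i) j.succ
    simp

/-- The statement of the Krull–Schmidt theorem, as a predicate on `n`. -/
def KSStatement (k : Type u) [Field k] (n : ℕ) : Prop :=
  ∀ (m : ℕ) (R : Fin n → Type u) (Q : Fin m → Type u)
    [∀ i, NonUnitalRing (R i)] [∀ i, Module k (R i)]
    [∀ i, SMulCommClass k (R i) (R i)] [∀ i, IsScalarTower k (R i) (R i)]
    [∀ j, NonUnitalRing (Q j)] [∀ j, Module k (Q j)]
    [∀ j, SMulCommClass k (Q j) (Q j)] [∀ j, IsScalarTower k (Q j) (Q j)],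
    (∀ i, Nontrivial (R i)) → (∀ j, Nontrivial (Q j)) →
    (∀ i, FiniteDimensional k (R i)) → (∀ j, FiniteDimensional k (Q j)) →
    (∀ i, ¬ IsDecomposableAlg k (R i)) → (∀ j, ¬ IsDecomposableAlg k (Q j)) →
    NuAlgIso k (∀ i, R i) (∀ j, Q j) →
    n = m ∧ ∃ σ : Fin n ≃ Fin m, ∀ i, NuAlgIso k (R i) (Q (σ i))

theorem KS_zero : KSStatement k 0 := by
  intro m R Q iR1 iR2 iR3 iR4 iQ1 iQ2 iQ3 iQ4 hRnt hQnt hRfd hQfd hRind hQind hiso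
  obtain ⟨e, -⟩ := hiso
  cases m with
  | zero => exact ⟨rfl, Equiv.refl _, fun i => i.elim0⟩
  | succ m =>
    exfalso
    haveI : Subsingleton (∀ i : Fin 0, R i) := ⟨fun f g => funext fun i => i.elim0⟩
    haveI : Nontrivial (Q 0) := hQnt 0
    obtain ⟨q, hq⟩ := exists_ne (0 : Q 0)
    have h1 : e.symm (Pi.single 0 q) = e.symm 0 := Subsingleton.elim _ _
    have h2 : Pi.single (0 : Fin (m + 1)) q = 0 := e.symm.injective h1
    have h3 := congrFun h2 0
    rw [Pi.single_eq_same] at h3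
    exact hq h3

theorem KS_succ (n : ℕ) (ih : KSStatement k n) : KSStatement k (n + 1) := by
  intro m R Q iR1 iR2 iR3 iR4 iQ1 iQ2 iQ3 iQ4 hRnt hQnt hRfd hQfd hRind hQind hiso
  cases m with
  | zero =>
    exfalso
    obtain ⟨e, -⟩ := hiso
    haveI : Subsingleton (∀ j : Fin 0, Q j) := ⟨fun f g => funext fun j => j.elim0⟩
    haveI : Nontrivial (R 0) := hRnt 0
    obtain ⟨r, hr⟩ := exists_ne (0 : R 0)
    have h1 : e (Pi.single 0 r) = e 0 := Subsingleton.elim _ _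
    have h2 : Pi.single (0 : Fin (n + 1)) r = 0 := e.injective h1
    have h3 := congrFun h2 0
    rw [Pi.single_eq_same] at h3
    exact hr h3
  | succ m' =>
    have hsplit : NuAlgIso k (R 0 × ∀ i : Fin n, R i.succ) (∀ i, R i) := iso_cons R
    have hiso' : NuAlgIso k (R 0 × ∀ i : Fin n, R i.succ) (∀ j, Q j) :=
      iso_trans hsplit hiso
    obtain ⟨j₀, hisoA, hisoB⟩ := exchange (R 0) (∀ i : Fin n, R i.succ) Q
      (hRnt 0) (hRfd 0) (hRind 0) hQnt hQfd hQind hiso'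
    obtain ⟨hnm, σ', hσ'⟩ := ih m' (fun i => R i.succ) (fun j => Q (j₀.succAbove j))
      (fun i => hRnt _) (fun j => hQnt _) (fun i => hRfd _) (fun j => hQfd _)
      (fun i => hRind _) (fun j => hQind _) hisoB
    subst hnm
    refine ⟨rfl, (finSuccEquiv n).trans ((Equiv.optionCongr σ').trans
      (finSuccEquiv' j₀).symm), ?_⟩
    intro i
    refine Fin.cases ?_ (fun i' => ?_) i
    · have hs : ((finSuccEquiv n).trans ((Equiv.optionCongr σ').trans
          (finSuccEquiv' j₀).symm)) 0 = j₀ := by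
        simp [finSuccEquiv_zero, finSuccEquiv'_symm_none]
      rw [hs]
      exact hisoA
    · have hs : ((finSuccEquiv n).trans ((Equiv.optionCongr σ').trans
          (finSuccEquiv' j₀).symm)) i'.succ = j₀.succAbove (σ' i') := by
        simp [finSuccEquiv_succ, finSuccEquiv'_symm_some]
      rw [hs]
      exact hσ' i'

theorem KS_all (n : ℕ) : KSStatement k n := by
  induction n with
  | zero => exact KS_zero
  | succ n ih => exact KS_succ n ih

end Assemble

end KS

/-- **Krull–Schmidt theorem for finite-dimensional non-unital algebras**
(Theorem B of the paper). If `R₁ × ⋯ × Rₙ ≅ Q₁ × ⋯ × Q_m` as non-unital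
`k`-algebras, where all factors are nonzero, finite-dimensional and
indecomposable, then `n = m` and, after a permutation, `Rᵢ ≅ Q_{σ(i)}`. -/
theorem krull_schmidt_algebras (k : Type u) [Field k] (n m : ℕ)
    (R : Fin n → Type u) (Q : Fin m → Type u)
    [∀ i, NonUnitalRing (R i)] [∀ i, Module k (R i)]
    [∀ i, SMulCommClass k (R i) (R i)] [∀ i, IsScalarTower k (R i) (R i)]
    [∀ j, NonUnitalRing (Q j)] [∀ j, Module k (Q j)]
    [∀ j, SMulCommClass k (Q j) (Q j)] [∀ j, IsScalarTower k (Q j) (Q j)]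
    (hRnt : ∀ i, Nontrivial (R i)) (hQnt : ∀ j, Nontrivial (Q j))
    (hRfd : ∀ i, FiniteDimensional k (R i)) (hQfd : ∀ j, FiniteDimensional k (Q j))
    (hRind : ∀ i, ¬ IsDecomposableAlg k (R i))
    (hQind : ∀ j, ¬ IsDecomposableAlg k (Q j))
    (hiso : NuAlgIso k (∀ i, R i) (∀ j, Q j)) :
    n = m ∧ ∃ σ : Fin n ≃ Fin m, ∀ i, NuAlgIso k (R i) (Q (σ i)) :=
  KS.KS_all n m R Q hRnt hQnt hRfd hQfd hRind hQind hiso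
end

section
/- Let I and J be disjoint finite sets of natural numbers, and let σ ⊆ I and τ ⊆ J. Then θ(σ, I) + θ(τ, J) + θ(σ ∪ τ, I ∪ J) + θ(I \ σ, J \ τ) ≡ θ(I, J) + θ(τ, I) + θ(I \ σ, τ) (mod 2). -/
/-- `theta S T = Σ_{s ∈ S} #{t ∈ T : t < s}`, the number of pairs
`(s, t) ∈ S × T` with `t < s`. -/
def theta (S T : Finset ℕ) : ℕ :=
  ∑ s ∈ S, (T.filter fun t => t < s).card

lemma theta_union_left (S₁ S₂ T : Finset ℕ) (h : Disjoint S₁ S₂) :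
    theta (S₁ ∪ S₂) T = theta S₁ T + theta S₂ T := by
  unfold theta
  exact Finset.sum_union h

lemma theta_union_right (S T₁ T₂ : Finset ℕ) (h : Disjoint T₁ T₂) :
    theta S (T₁ ∪ T₂) = theta S T₁ + theta S T₂ := by
  unfold theta
  rw [← Finset.sum_add_distrib]
  refine Finset.sum_congr rfl fun s _ => ?_
  rw [Finset.filter_union]
  exact Finset.card_union_of_disjoint (Finset.disjoint_filter_filter h)

/-- For disjoint finite sets `I, J` of natural numbers and subsets `σ ⊆ I`, `τ ⊆ J`:
`θ(σ,I) + θ(τ,J) + θ(σ∪τ, I∪J) + θ(I\σ, J\τ) ≡ θ(I,J) + θ(τ,I) + θ(I\σ, τ)  (mod 2)`. -/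
theorem theta_sign_congruence (I J σ τ : Finset ℕ)
    (hdisj : Disjoint I J) (hσ : σ ⊆ I) (hτ : τ ⊆ J) :
    theta σ I + theta τ J + theta (σ ∪ τ) (I ∪ J) + theta (I \ σ) (J \ τ) ≡
      theta I J + theta τ I + theta (I \ σ) τ [MOD 2] := by
  have hστ : Disjoint σ τ := hdisj.mono hσ hτ
  have h1 : theta (σ ∪ τ) (I ∪ J) = theta σ I + theta σ J + (theta τ I + theta τ J) := by
    rw [theta_union_left _ _ _ hστ, theta_union_right _ _ _ hdisj,
      theta_union_right _ _ _ hdisj]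
  have hJ : τ ∪ (J \ τ) = J := Finset.union_sdiff_of_subset hτ
  have hI : σ ∪ (I \ σ) = I := Finset.union_sdiff_of_subset hσ
  have h2 : theta I J = theta σ τ + theta σ (J \ τ) + (theta (I \ σ) τ + theta (I \ σ) (J \ τ)) := by
    conv_lhs => rw [← hI, ← hJ]
    rw [theta_union_left _ _ _ Finset.disjoint_sdiff,
      theta_union_right _ _ _ Finset.disjoint_sdiff,
      theta_union_right _ _ _ Finset.disjoint_sdiff]
  have h3 : theta σ J = theta σ τ + theta σ (J \ τ) := by
    conv_lhs => rw [← hJ]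
    rw [theta_union_right _ _ _ Finset.disjoint_sdiff]
  unfold Nat.ModEq
  omega
end
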